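/- Assume σ₂(W) < 1. Let f : ℝ^{m×n} → ℝ be convex and differentiable with gradient ∇f, let M ≥ 0, and let h : ℝ^{m×n} → ℝ be convex and (√m·M)-Lipschitz, i.e. |h(x) − h(y)| ≤ √m·M·‖x − y‖_F for all x, y. Suppose x* minimizes F = f + h over the subspace {x ∈ ℝ^{m×n} : Ux = 0}. Then there exist g ∈ ℝ^{m×n} with h(y) ≥ h(x*) + ⟨g, y − x*⟩ for all y (a subgradient of h at x*) and λ* ∈ ℝ^{m×n} such that ∇f(x*) + g + Uλ* = 0 and ‖λ*‖_F ≤ (√m·M + ‖∇f(x*)‖_F) / √(1 − σ₂(W)). -/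

import Mathlib

open scoped RealInnerProductSpace
open Matrix

/-- Left multiplication of `x ∈ ℝ^{m×n}` by an `m × m` matrix `A`,
with `ℝ^{m×n}` viewed as a Euclidean space with the Frobenius inner product. -/
noncomputable def matApply {m n : ℕ} (A : Matrix (Fin m) (Fin m) ℝ)
    (x : EuclideanSpace ℝ (Fin m × Fin n)) : EuclideanSpace ℝ (Fin m × Fin n) :=
  WithLp.toLp 2 (fun p : Fin m × Fin n => ∑ k : Fin m, A p.1 k * x (k, p.2))

namespace Stmt11Aux

variable {m n : ℕ}

def colOnes (j : Fin n) : EuclideanSpace ℝ (Fin m × Fin n) :=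
  WithLp.toLp 2 (fun p : Fin m × Fin n => if p.2 = j then (1:ℝ) else 0)



lemma matApply_add (A : Matrix (Fin m) (Fin m) ℝ) (x y : EuclideanSpace ℝ (Fin m × Fin n)) :
    matApply A (x + y) = matApply A x + matApply A y := by
  ext p
  simp [matApply, mul_add, Finset.sum_add_distrib]

lemma matApply_smul (A : Matrix (Fin m) (Fin m) ℝ) (c : ℝ) (x : EuclideanSpace ℝ (Fin m × Fin n)) :
    matApply A (c • x) = c • matApply A x := by
  ext p
  simp [matApply, Finset.mul_sum, mul_left_comm]

noncomputable def matL (A : Matrix (Fin m) (Fin m) ℝ) :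
    EuclideanSpace ℝ (Fin m × Fin n) →ₗ[ℝ] EuclideanSpace ℝ (Fin m × Fin n) where
  toFun := matApply A
  map_add' := matApply_add A
  map_smul' := matApply_smul A

lemma matL_apply (A : Matrix (Fin m) (Fin m) ℝ) (x : EuclideanSpace ℝ (Fin m × Fin n)) :
    matL A x = matApply A x := rfl

lemma inner_matApply (A : Matrix (Fin m) (Fin m) ℝ) (hA : A.IsSymm)
    (x y : EuclideanSpace ℝ (Fin m × Fin n)) :
    ⟪matApply A x, y⟫ = ⟪x, matApply A y⟫ := by
  simp only [PiLp.inner_apply, RCLike.inner_apply, conj_trivial, matApply,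
    Fintype.sum_prod_type, Finset.sum_mul, Finset.mul_sum]
  conv_lhs => enter [2]; ext i; rw [Finset.sum_comm]
  rw [Finset.sum_comm]
  conv_rhs => enter [2]; ext i; rw [Finset.sum_comm]
  refine Finset.sum_congr rfl fun a _ => Finset.sum_congr rfl fun b _ =>
    Finset.sum_congr rfl fun j _ => ?_
  rw [hA.apply b a]
  ring

lemma matApply_mul (A B : Matrix (Fin m) (Fin m) ℝ) (x : EuclideanSpace ℝ (Fin m × Fin n)) :
    matApply (A * B) x = matApply A (matApply B x) := by
  ext p
  simp only [matApply, Matrix.mul_apply, Finset.sum_mul, Finset.mul_sum]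
  rw [Finset.sum_comm]
  simp [mul_assoc]



lemma U_isSymm {U : Matrix (Fin m) (Fin m) ℝ} (hUpsd : U.PosSemidef) : U.IsSymm := by
  rw [Matrix.IsSymm, ← Matrix.conjTranspose_eq_transpose_of_trivial]
  exact hUpsd.1

lemma U_mulVec_one {W U : Matrix (Fin m) (Fin m) ℝ}
    (hW1 : W.mulVec (fun _ => (1 : ℝ)) = fun _ => (1 : ℝ))
    (hUpsd : U.PosSemidef) (hUU : U * U = 1 - W) :
    U.mulVec (fun _ => (1 : ℝ)) = 0 := by
  set v : Fin m → ℝ := fun _ => (1 : ℝ) with hv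
  have hUUv : U.mulVec (U.mulVec v) = 0 := by
    rw [Matrix.mulVec_mulVec, hUU, Matrix.sub_mulVec, Matrix.one_mulVec, hW1]
    simp
  have hdot : (U.mulVec v) ⬝ᵥ (U.mulVec v) = 0 := by
    rw [Matrix.dotProduct_mulVec, ← Matrix.mulVec_transpose, (U_isSymm hUpsd).eq, hUUv]
    simp [dotProduct]
  have := fun i => (Finset.sum_eq_zero_iff_of_nonneg
    (fun i _ => mul_self_nonneg (U.mulVec v i))).1 hdot i (Finset.mem_univ i)
  funext i
  exact mul_self_eq_zero.1 (this i)

/-- the constant-column matrix supported on column `j` lies in the kernel. -/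
lemma matApply_colOnes {W U : Matrix (Fin m) (Fin m) ℝ}
    (hW1 : W.mulVec (fun _ => (1 : ℝ)) = fun _ => (1 : ℝ))
    (hUpsd : U.PosSemidef) (hUU : U * U = 1 - W) (j : Fin n) :
    matApply U (colOnes j) = 0 := by
  have h1 := U_mulVec_one hW1 hUpsd hUU
  ext p
  by_cases hp : p.2 = j
  · have := congrFun h1 p.1
    simpa [matApply, colOnes, hp, Matrix.mulVec, dotProduct] using this
  · simp [matApply, colOnes, hp]



lemma matApply_one (x : EuclideanSpace ℝ (Fin m × Fin n)) :
    matApply (1 : Matrix (Fin m) (Fin m) ℝ) x = x := by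
  ext p
  simp [matApply, Matrix.one_apply, Finset.sum_ite_eq]

lemma matApply_subM (A B : Matrix (Fin m) (Fin m) ℝ) (x : EuclideanSpace ℝ (Fin m × Fin n)) :
    matApply (A - B) x = matApply A x - matApply B x := by
  ext p
  simp [matApply, sub_mul, Finset.sum_sub_distrib]

lemma inner_colOnes (x : EuclideanSpace ℝ (Fin m × Fin n)) (j : Fin n) :
    ⟪colOnes j, x⟫ = ∑ i, x (i, j) := by
  simp [colOnes, PiLp.inner_apply, RCLike.inner_apply, Fintype.sum_prod_type, Finset.sum_ite_eq']

lemma spectral {W : Matrix (Fin m) (Fin m) ℝ} {σ : ℝ}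
    (hσ : ∀ v : Fin m → ℝ, (∑ i, v i) = 0 →
      dotProduct v (W.mulVec v) ≤ σ * dotProduct v v)
    (x : EuclideanSpace ℝ (Fin m × Fin n)) (hx : ∀ j, ∑ i, x (i,j) = 0) :
    ⟪x, matApply W x⟫ ≤ σ * ⟪x,x⟫ := by
  have key : ∀ j : Fin n, (∑ i, x (i,j) * ∑ k, W i k * x (k,j))
      ≤ σ * ∑ i, x (i,j) * x (i,j) := by
    intro j
    have := hσ (fun i => x (i,j)) (hx j)
    simpa [dotProduct, Matrix.mulVec, Finset.mul_sum] using this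
  calc ⟪x, matApply W x⟫ = ∑ j, ∑ i, x (i,j) * ∑ k, W i k * x (k,j) := by
        simp only [PiLp.inner_apply, RCLike.inner_apply, conj_trivial, matApply,
          Fintype.sum_prod_type, PiLp.toLp_apply]
        rw [Finset.sum_comm]
        exact Finset.sum_congr rfl fun _ _ => Finset.sum_congr rfl fun _ _ => by ring
    _ ≤ ∑ j, σ * ∑ i, x (i,j) * x (i,j) := Finset.sum_le_sum (fun j _ => key j)
    _ = σ * ⟪x,x⟫ := by
        rw [← Finset.mul_sum]
        congr 1
        simp only [PiLp.inner_apply, RCLike.inner_apply, conj_trivial, Fintype.sum_prod_type]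
        exact Finset.sum_comm




lemma matApply_zero (A : Matrix (Fin m) (Fin m) ℝ) :
    matApply A (0 : EuclideanSpace ℝ (Fin m × Fin n)) = 0 := map_zero (matL A)

lemma matApply_neg (A : Matrix (Fin m) (Fin m) ℝ) (x : EuclideanSpace ℝ (Fin m × Fin n)) :
    matApply A (-x) = -matApply A x := map_neg (matL A) x

lemma normsq_lower {W U : Matrix (Fin m) (Fin m) ℝ} {σ : ℝ}
    (hUsymm : U.IsSymm) (hUU : U * U = 1 - W)
    (hσ : ∀ v : Fin m → ℝ, (∑ i, v i) = 0 →
      dotProduct v (W.mulVec v) ≤ σ * dotProduct v v)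
    (x : EuclideanSpace ℝ (Fin m × Fin n)) (hx : ∀ j, ∑ i, x (i,j) = 0) :
    (1 - σ) * ⟪x,x⟫ ≤ ⟪matApply U x, matApply U x⟫ := by
  have h1 : ⟪matApply U x, matApply U x⟫ = ⟪x, matApply (U*U) x⟫ := by
    rw [inner_matApply U hUsymm, ← matApply_mul]
  rw [h1, hUU, matApply_subM, matApply_one, inner_sub_right]
  have h2 := spectral hσ x hx
  linarith

end Stmt11Aux

set_option maxHeartbeats 1000000 in
open Stmt11Aux in
theorem stmt11 (m n : ℕ) (hm : 0 < m)
    (W U : Matrix (Fin m) (Fin m) ℝ) (σ : ℝ)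
    (hWsymm : W.IsSymm)
    (hW1 : W.mulVec (fun _ => (1 : ℝ)) = fun _ => (1 : ℝ))
    (hWpsd : W.PosSemidef) (hIW : (1 - W).PosSemidef)
    (hUpsd : U.PosSemidef) (hUU : U * U = 1 - W)
    -- `σ` is (an upper bound for) the second largest eigenvalue of `W`:
    -- it bounds the Rayleigh quotient of `W` on the orthogonal complement of `1`
    (hσ : ∀ v : Fin m → ℝ, (∑ i, v i) = 0 →
      dotProduct v (W.mulVec v) ≤ σ * dotProduct v v)
    (hσ1 : σ < 1)
    (f h : EuclideanSpace ℝ (Fin m × Fin n) → ℝ)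
    (gf : EuclideanSpace ℝ (Fin m × Fin n) → EuclideanSpace ℝ (Fin m × Fin n))
    (hconv : ConvexOn ℝ Set.univ f)
    (hgrad : ∀ x, HasGradientAt f (gf x) x)
    (M : ℝ) (hM : 0 ≤ M)
    (hhconv : ConvexOn ℝ Set.univ h)
    (hhlip : ∀ x y, |h x - h y| ≤ Real.sqrt m * M * ‖x - y‖)
    (xs : EuclideanSpace ℝ (Fin m × Fin n))
    (hxs : matApply U xs = 0)
    (hmin : ∀ y, matApply U y = 0 → f xs + h xs ≤ f y + h y) :
    ∃ g lam : EuclideanSpace ℝ (Fin m × Fin n),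
      (∀ y, h xs + ⟪g, y - xs⟫ ≤ h y) ∧
      gf xs + g + matApply U lam = 0 ∧
      ‖lam‖ ≤ (Real.sqrt m * M + ‖gf xs‖) / Real.sqrt (1 - σ) := by
  classical
  have hUsymm : U.IsSymm := U_isSymm hUpsd
  set L : ℝ := Real.sqrt m * M with hLdef
  have hL0 : 0 ≤ L := mul_nonneg (Real.sqrt_nonneg _) hM
  -- continuity of h
  have hcont : Continuous h := by
    have : LipschitzWith (Real.toNNReal L) h :=
      LipschitzWith.of_dist_le_mul (fun x y => by
        rw [Real.dist_eq, dist_eq_norm, Real.coe_toNNReal _ hL0]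
        exact hhlip x y)
    exact this.continuous
  -- the shifted objective
  set H : EuclideanSpace ℝ (Fin m × Fin n) → ℝ := fun y => h y + ⟪gf xs, y⟫ with hHdef
  have hHcont : Continuous H := by
    apply hcont.add
    exact (innerSL ℝ (gf xs)).continuous
  have hHconv : ConvexOn ℝ Set.univ H :=
    hhconv.add ((innerSL ℝ (gf xs)).toLinearMap.convexOn convex_univ)
  -- minimality of H along the kernel
  have hHmin : ∀ k, matApply U k = 0 → H xs ≤ H (xs + k) := by
    intro k hk
    have hkd : ∀ t : ℝ, matApply U (xs + t • k) = 0 := by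
      intro t
      rw [matApply_add, matApply_smul, hxs, hk]
      simp
    have hquot : ∀ t : ℝ, t ∈ Set.Ioc (0:ℝ) 1 →
        h xs - h (xs + k) ≤ (f (xs + t • k) - f xs) / t := by
      intro t ht
      have hmin' := hmin (xs + t • k) (hkd t)
      have hconvh := hhconv.2 (Set.mem_univ xs) (Set.mem_univ (xs + k))
        (by linarith [ht.2] : (0:ℝ) ≤ 1 - t) ht.1.le (by ring)
      have heq : (1 - t) • xs + t • (xs + k) = xs + t • k := by module
      rw [heq] at hconvh
      simp only [smul_eq_mul] at hconvh
      rw [le_div_iff₀ ht.1]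
      nlinarith [hmin', hconvh]
    have hd : HasDerivAt (fun t : ℝ => f (xs + t • k)) ⟪gf xs, k⟫ 0 := by
      have hg := (hgrad xs).hasFDerivAt
      have hline : HasDerivAt (fun t : ℝ => xs + t • k) k 0 := by
        simpa using ((hasDerivAt_id (0:ℝ)).smul_const k).const_add xs
      have hg' : HasFDerivAt f
          ((InnerProductSpace.toDual ℝ (EuclideanSpace ℝ (Fin m × Fin n))) (gf xs))
          ((fun t : ℝ => xs + t • k) 0) := by simpa using hg
      have hcomp := hg'.comp_hasDerivAt 0 hline
      simp only [InnerProductSpace.toDual_apply_apply] at hcomp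
      exact hcomp
    have hslope := hasDerivAt_iff_tendsto_slope.1 hd
    have h2 : Filter.Tendsto (slope (fun t : ℝ => f (xs + t • k)) 0)
        (nhdsWithin 0 (Set.Ioi 0)) (nhds ⟪gf xs, k⟫) :=
      hslope.mono_left (nhdsWithin_mono 0 (fun t ht => ne_of_gt ht))
    have hge : h xs - h (xs + k) ≤ ⟪gf xs, k⟫ := by
      refine ge_of_tendsto h2 ?_
      filter_upwards [Ioc_mem_nhdsGT (zero_lt_one)] with t ht
      have := hquot t ht
      simpa [slope, sub_zero, div_eq_inv_mul] using this
    have hexp : H (xs + k) = h (xs + k) + ⟪gf xs, xs⟫ + ⟪gf xs, k⟫ := by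
      show h (xs + k) + ⟪gf xs, xs + k⟫ = _
      rw [inner_add_right]; ring
    have hXs : H xs = h xs + ⟪gf xs, xs⟫ := rfl
    rw [hexp, hXs]
    linarith
  -- the open convex set (strict epigraph over the kernel translates)
  set A : Set ((EuclideanSpace ℝ (Fin m × Fin n)) × ℝ) :=
    {p | ∃ k, matApply U k = 0 ∧ H (xs + p.1 + k) < p.2} with hAdef
  have hAopen : IsOpen A := by
    have hA2 : A = ⋃ k ∈ {k : EuclideanSpace ℝ (Fin m × Fin n) | matApply U k = 0},
        {p : (EuclideanSpace ℝ (Fin m × Fin n)) × ℝ | H (xs + p.1 + k) < p.2} := by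
      ext p
      simp [hAdef]
    rw [hA2]
    refine isOpen_biUnion fun k _ => ?_
    exact isOpen_lt (hHcont.comp (by fun_prop)) continuous_snd
  have hAconv : Convex ℝ A := by
    rintro ⟨z1, t1⟩ ⟨k1, hk1, hlt1⟩ ⟨z2, t2⟩ ⟨k2, hk2, hlt2⟩ a b ha hb hab
    refine Set.mem_setOf.2 ⟨a • k1 + b • k2, ?_, ?_⟩
    · rw [matApply_add, matApply_smul, matApply_smul, hk1, hk2]
      simp
    · show H (xs + (a • z1 + b • z2) + (a • k1 + b • k2)) < a * t1 + b * t2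
      have hxsab : xs = a • xs + b • xs := by rw [← add_smul, hab, one_smul]
      have hcomb : xs + (a • z1 + b • z2) + (a • k1 + b • k2)
          = a • (xs + z1 + k1) + b • (xs + z2 + k2) := by
        nth_rewrite 1 [hxsab]
        module
      rw [hcomb]
      have hcv := hHconv.2 (Set.mem_univ (xs + z1 + k1)) (Set.mem_univ (xs + z2 + k2)) ha hb hab
      simp only [smul_eq_mul] at hcv
      rcases eq_or_lt_of_le ha with ha0 | hapos
      · have hb1 : b = 1 := by linarith
        have := mul_le_mul_of_nonneg_left hlt1.le ha
        have := mul_lt_mul_of_pos_left hlt2 (by rw [hb1]; norm_num : (0:ℝ) < b)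
        linarith
      · have := mul_lt_mul_of_pos_left hlt1 hapos
        have := mul_le_mul_of_nonneg_left hlt2.le hb
        linarith
  have hA0 : ((0 : EuclideanSpace ℝ (Fin m × Fin n)), H xs) ∉ A := by
    rintro ⟨k, hk, hlt⟩
    have := hHmin k hk
    rw [add_zero] at hlt
    exact absurd hlt (not_lt.2 this)
  obtain ⟨φ, hφ⟩ := geometric_hahn_banach_open_point hAconv hAopen hA0
  set c : ℝ := φ ((0 : EuclideanSpace ℝ (Fin m × Fin n)), (1:ℝ)) with hcdef
  have hsplit : ∀ (z : EuclideanSpace ℝ (Fin m × Fin n)) (t : ℝ),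
      φ (z, t) = φ (z, 0) + t * c := by
    intro z t
    have hzt : ((z, t) : (EuclideanSpace ℝ (Fin m × Fin n)) × ℝ)
        = (z, (0:ℝ)) + t • ((0 : EuclideanSpace ℝ (Fin m × Fin n)), (1:ℝ)) := by
      apply Prod.ext <;> simp
    rw [hzt, map_add, _root_.map_smul, smul_eq_mul]
  have hz00 : φ ((0 : EuclideanSpace ℝ (Fin m × Fin n)), (0:ℝ)) = 0 := by
    have : ((0 : EuclideanSpace ℝ (Fin m × Fin n)), (0:ℝ))
        = (0 : (EuclideanSpace ℝ (Fin m × Fin n)) × ℝ) := rfl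
    rw [this, map_zero]
  have hcneg : c < 0 := by
    have hmem : ((0 : EuclideanSpace ℝ (Fin m × Fin n)), H xs + 1) ∈ A := by
      refine Set.mem_setOf.2 ⟨0, ?_, ?_⟩
      · exact matApply_zero U
      · show H (xs + 0 + 0) < H xs + 1
        rw [add_zero, add_zero]; linarith
    have hlt := hφ _ hmem
    rw [hsplit 0 (H xs + 1), hsplit 0 (H xs), hz00] at hlt
    have he1 : (H xs + 1) * c = H xs * c + c := by ring
    linarith
  -- φ vanishes on the kernel (first coordinate)
  have hψle : ∀ k, matApply U k = 0 → φ (k, (0:ℝ)) ≤ 0 := by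
    intro k hk
    have hm2 : ∀ ε : ℝ, 0 < ε → φ (k, (0:ℝ)) < -(ε * c) := by
      intro ε hε
      have hmem : ((k : EuclideanSpace ℝ (Fin m × Fin n)), H xs + ε) ∈ A := by
        refine Set.mem_setOf.2 ⟨-k, ?_, ?_⟩
        · rw [matApply_neg, hk, neg_zero]
        · show H (xs + k + -k) < H xs + ε
          have hxk : xs + k + -k = xs := by abel
          rw [hxk]; linarith
      have hlt := hφ _ hmem
      rw [hsplit k (H xs + ε), hsplit 0 (H xs), hz00] at hlt
      have he1 : (H xs + ε) * c = H xs * c + ε * c := by ring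
      linarith
    by_contra hpos
    push_neg at hpos
    have hcp : (0:ℝ) < -c := by linarith
    have hεp : (0:ℝ) < φ (k, (0:ℝ)) / (-c) := div_pos hpos hcp
    have := hm2 _ hεp
    have heq : -(φ (k, (0:ℝ)) / (-c) * c) = φ (k, (0:ℝ)) := by
      field_simp
      rw [div_self (ne_of_lt hcneg)]
    linarith
  have hψK : ∀ k, matApply U k = 0 → φ (k, (0:ℝ)) = 0 := by
    intro k hk
    have h1 := hψle k hk
    have hk' : matApply U (-k) = 0 := by
      rw [matApply_neg, hk, neg_zero]
    have h2 := hψle (-k) hk'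
    have hneg : ((-k : EuclideanSpace ℝ (Fin m × Fin n)), (0:ℝ)) = -(k, (0:ℝ)) := by
      apply Prod.ext <;> simp
    rw [hneg, map_neg] at h2
    linarith
  -- global key inequality
  have hkey : ∀ y, φ (y - xs, (0:ℝ)) + H y * c ≤ H xs * c := by
    intro y
    by_contra hcon
    push_neg at hcon
    have hcp : (0:ℝ) < -c := by linarith
    set δ := (φ (y - xs, (0:ℝ)) + H y * c - H xs * c) / (-c) with hδdef
    have hδpos : 0 < δ := div_pos (by linarith) hcp
    have hmem : ((y - xs : EuclideanSpace ℝ (Fin m × Fin n)), H y + δ) ∈ A := by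
      refine Set.mem_setOf.2 ⟨0, ?_, ?_⟩
      · exact matApply_zero U
      · show H (xs + (y - xs) + 0) < H y + δ
        have hxy : xs + (y - xs) + 0 = y := by abel
        rw [hxy]; linarith
    have hlt := hφ _ hmem
    rw [hsplit (y - xs) (H y + δ), hsplit 0 (H xs), hz00] at hlt
    have he1 : (H y + δ) * c = H y * c + δ * c := by ring
    have he2 : δ * c = -(φ (y - xs, (0:ℝ)) + H y * c - H xs * c) := by
      rw [hδdef]
      rw [div_neg, neg_mul, div_mul_cancel₀ _ (ne_of_lt hcneg)]
    linarith
  -- Riesz representation of the first-coordinate part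
  set ψ : EuclideanSpace ℝ (Fin m × Fin n) →L[ℝ] ℝ :=
    φ.comp (ContinuousLinearMap.inl ℝ (EuclideanSpace ℝ (Fin m × Fin n)) ℝ) with hψdef
  have hψap : ∀ z, ψ z = φ (z, (0:ℝ)) := fun z => rfl
  set w : EuclideanSpace ℝ (Fin m × Fin n) :=
    (InnerProductSpace.toDual ℝ (EuclideanSpace ℝ (Fin m × Fin n))).symm ψ with hwdef
  have hw : ∀ z, ⟪w, z⟫ = φ (z, (0:ℝ)) := by
    intro z
    rw [hwdef, InnerProductSpace.toDual_symm_apply, hψap]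
  set g' : EuclideanSpace ℝ (Fin m × Fin n) := (-c)⁻¹ • w with hg'def
  have hg'in : ∀ z, ⟪g', z⟫ = (-c)⁻¹ * φ (z, (0:ℝ)) := by
    intro z
    rw [hg'def, real_inner_smul_left, hw]
  have hcp : (0:ℝ) < -c := by linarith
  -- g' is a global subgradient of H at xs
  have hsub' : ∀ y, H xs + ⟪g', y - xs⟫ ≤ H y := by
    intro y
    have h1 := hkey y
    have h2 : φ (y - xs, (0:ℝ)) ≤ (-c) * (H y - H xs) := by linarith
    have h3 := mul_le_mul_of_nonneg_left h2 (inv_nonneg.2 hcp.le)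
    rw [inv_mul_cancel_left₀ (ne_of_gt hcp)] at h3
    rw [hg'in]
    linarith
  -- the kernel submodule and its orthogonal complement
  set K : Submodule ℝ (EuclideanSpace ℝ (Fin m × Fin n)) := LinearMap.ker (matL U) with hKdef
  have hmemK : ∀ k, k ∈ K ↔ matApply U k = 0 := fun k => Iff.rfl
  have hcolsum : ∀ x : EuclideanSpace ℝ (Fin m × Fin n), x ∈ Kᗮ →
      ∀ j, ∑ i, x (i, j) = 0 := by
    intro x hx j
    have hcol : colOnes j ∈ K := (hmemK _).2 (matApply_colOnes hW1 hUpsd hUU j)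
    have := (Submodule.mem_orthogonal K x).1 hx (colOnes j) hcol
    rwa [inner_colOnes] at this
  have hg'mem : g' ∈ Kᗮ := by
    rw [Submodule.mem_orthogonal]
    intro u hu
    rw [real_inner_comm, hg'in, hψK u ((hmemK u).1 hu), mul_zero]
  -- U maps Kᗮ to itself
  have hmaps : ∀ x ∈ Kᗮ, matL U x ∈ Kᗮ := by
    intro x hx
    rw [Submodule.mem_orthogonal]
    intro u hu
    have h1 : (⟪u, matApply U x⟫ : ℝ) = ⟪matApply U u, x⟫ := (inner_matApply U hUsymm u x).symm
    have h2 : matApply U u = 0 := (hmemK u).1 hu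
    show (⟪u, matApply U x⟫ : ℝ) = 0
    rw [h1, h2, inner_zero_left]
  set S : (Kᗮ : Submodule ℝ (EuclideanSpace ℝ (Fin m × Fin n))) →ₗ[ℝ] Kᗮ :=
    (matL U).restrict hmaps with hSdef
  have hSinj : Function.Injective S := by
    rw [injective_iff_map_eq_zero]
    intro x hx0
    have h0 : matApply U (x : EuclideanSpace ℝ (Fin m × Fin n)) = 0 := by
      have := congrArg (Subtype.val) hx0
      rwa [LinearMap.restrict_coe_apply] at this
    have hcs := hcolsum x.val x.2
    have hlow := normsq_lower hUsymm hUU hσ x.val hcs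
    rw [h0, inner_zero_left] at hlow
    have hnn : (0:ℝ) ≤ ⟪x.val, x.val⟫ := real_inner_self_nonneg
    have hzero : (⟪x.val, x.val⟫ : ℝ) = 0 := by nlinarith
    have := inner_self_eq_zero.1 hzero
    exact Subtype.ext this
  have hSsurj : Function.Surjective S := LinearMap.injective_iff_surjective.1 hSinj
  obtain ⟨lam₀, hlam₀⟩ := hSsurj ⟨-g', Submodule.neg_mem _ hg'mem⟩
  set lam : EuclideanSpace ℝ (Fin m × Fin n) := (lam₀ : EuclideanSpace ℝ (Fin m × Fin n))
    with hlamdef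
  have hTlam : matApply U lam = -g' := by
    have := congrArg Subtype.val hlam₀
    rwa [LinearMap.restrict_coe_apply] at this
  -- the subgradient
  set g : EuclideanSpace ℝ (Fin m × Fin n) := g' - gf xs with hgdef
  have hsubgrad : ∀ y, h xs + ⟪g, y - xs⟫ ≤ h y := by
    intro y
    have h1 := hsub' y
    have h2 : (⟪g, y - xs⟫ : ℝ) = ⟪g', y - xs⟫ - ⟪gf xs, y - xs⟫ := by
      rw [hgdef, inner_sub_left]
    have h3 : (⟪gf xs, y - xs⟫ : ℝ) = ⟪gf xs, y⟫ - ⟪gf xs, xs⟫ := inner_sub_right _ _ _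
    have h4 : H xs = h xs + ⟪gf xs, xs⟫ := rfl
    have h5 : H y = h y + ⟪gf xs, y⟫ := rfl
    rw [h4, h5] at h1
    linarith
  refine ⟨g, lam, hsubgrad, ?_, ?_⟩
  · rw [hTlam, hgdef]
    abel
  · -- the norm bound
    have h1σ : (0:ℝ) < 1 - σ := by linarith
    have hsq : (0:ℝ) < Real.sqrt (1 - σ) := Real.sqrt_pos.2 h1σ
    have hcs := hcolsum lam lam₀.2
    have hlow := normsq_lower hUsymm hUU hσ lam hcs
    rw [hTlam, inner_neg_neg] at hlow
    -- ‖g‖ ≤ L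
    have hgnorm : ‖g‖ ≤ L := by
      have h1 := hsubgrad (xs + g)
      have h2 : xs + g - xs = g := by abel
      rw [h2] at h1
      have h3 : (⟪g, g⟫ : ℝ) = ‖g‖^2 := real_inner_self_eq_norm_sq g
      have h4 := hhlip (xs + g) xs
      rw [show xs + g - xs = g from by abel] at h4
      have h5 : h (xs + g) - h xs ≤ L * ‖g‖ := le_trans (le_abs_self _) h4
      rcases eq_or_lt_of_le (norm_nonneg g) with h0 | h0
      · rw [← h0]; exact hL0
      · nlinarith
    have hg'norm : ‖g'‖ ≤ L + ‖gf xs‖ := by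
      have hgg : g' = g + gf xs := by rw [hgdef]; abel
      rw [hgg]
      exact le_trans (norm_add_le _ _) (by linarith)
    have hInl : (⟪lam, lam⟫ : ℝ) = ‖lam‖^2 := real_inner_self_eq_norm_sq lam
    have hIng : (⟪g', g'⟫ : ℝ) = ‖g'‖^2 := real_inner_self_eq_norm_sq g'
    have hb' : (Real.sqrt (1 - σ) * ‖lam‖)^2 ≤ ‖g'‖^2 := by
      rw [mul_pow, Real.sq_sqrt h1σ.le]
      rw [hInl, hIng] at hlow
      linarith
    have hfin : Real.sqrt (1 - σ) * ‖lam‖ ≤ ‖g'‖ := by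
      have hs2 := Real.sqrt_le_sqrt hb'
      rwa [Real.sqrt_sq (by positivity), Real.sqrt_sq (norm_nonneg _)] at hs2
    rw [le_div_iff₀ hsq]
    calc ‖lam‖ * Real.sqrt (1 - σ) = Real.sqrt (1 - σ) * ‖lam‖ := by ring
      _ ≤ ‖g'‖ := hfin
      _ ≤ L + ‖gf xs‖ := hg'norm
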